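/- For every fixed dimension d there exists a constant c > 0 (depending only on d) with the following property: let P be a convex polytope in R^d with wid(P) > 0, and let Δ_P be its witness simplex. Then c·wid(P) ≤ wid(Δ_P) ≤ wid(P). -/

import Mathlib

noncomputable def dirWidth {d : ℕ} (u : EuclideanSpace ℝ (Fin d))
    (A : Set (EuclideanSpace ℝ (Fin d))) : ℝ :=
  sSup ((fun p => (inner ℝ u p : ℝ)) '' A) - sInf ((fun p => (inner ℝ u p : ℝ)) '' A)

noncomputable def setWidth {d : ℕ} (A : Set (EuclideanSpace ℝ (Fin d))) : ℝ :=
  sInf {w | ∃ u : EuclideanSpace ℝ (Fin d), ‖u‖ = 1 ∧ w = dirWidth u A}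

section Helpers

variable {d : ℕ} {A B : Set (EuclideanSpace ℝ (Fin d))}

private theorem le_infDist' {s : Set (EuclideanSpace ℝ (Fin d))} {x : EuclideanSpace ℝ (Fin d)}
    {b : ℝ} (hs : s.Nonempty) (h : ∀ y ∈ s, b ≤ dist x y) : b ≤ Metric.infDist x s := by
  rw [Metric.infDist_eq_iInf]
  have : Nonempty s := hs.to_subtype
  exact le_ciInf fun y => h y y.2

private theorem infDist_eq_dist_orthProj (s : AffineSubspace ℝ (EuclideanSpace ℝ (Fin d)))
    [Nonempty s] (p : EuclideanSpace ℝ (Fin d)) :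
    Metric.infDist p s = dist p (EuclideanGeometry.orthogonalProjection s p) := by
  apply le_antisymm
  · exact Metric.infDist_le_dist_of_mem (EuclideanGeometry.orthogonalProjection_mem p)
  · apply le_infDist' ⟨_, (EuclideanGeometry.orthogonalProjection_mem p :
      ((EuclideanGeometry.orthogonalProjection s p : EuclideanSpace ℝ (Fin d)) : EuclideanSpace ℝ (Fin d)) ∈ (s : Set (EuclideanSpace ℝ (Fin d))))⟩
    intro y hy
    have := EuclideanGeometry.dist_sq_eq_dist_orthogonalProjection_sq_add_dist_orthogonalProjection_sq (s := s) p hy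
    nlinarith [dist_nonneg (x := p) (y := y), dist_comm p y,
      dist_nonneg (x := y) (y := (EuclideanGeometry.orthogonalProjection s p : EuclideanSpace ℝ (Fin d)))]

private theorem abs_inner_le_infDist (s : AffineSubspace ℝ (EuclideanSpace ℝ (Fin d)))
    {e : EuclideanSpace ℝ (Fin d)} (he : ‖e‖ = 1)
    (hee : e ∈ s.directionᗮ) {q : EuclideanSpace ℝ (Fin d)} (hq : q ∈ s)
    (w : EuclideanSpace ℝ (Fin d)) :
    |(inner ℝ e (w - q) : ℝ)| ≤ Metric.infDist w s := by
  apply le_infDist' ⟨q, hq⟩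
  intro y hy
  have h1 : (inner ℝ e (w - q) : ℝ) = inner ℝ e (w - y) := by
    have hmem : y - q ∈ s.direction := AffineSubspace.vsub_mem_direction hy hq
    have hz : (inner ℝ e (y - q) : ℝ) = 0 := real_inner_comm (y - q) e ▸ hee (y - q) hmem
    have hsplit : w - q = (w - y) + (y - q) := by abel
    rw [hsplit, inner_add_right, hz, add_zero]
  rw [h1]
  calc |(inner ℝ e (w - y) : ℝ)| ≤ ‖e‖ * ‖w - y‖ := abs_real_inner_le_norm e (w - y)
    _ = dist w y := by rw [he, one_mul, dist_eq_norm]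

private theorem inner_cont (u : EuclideanSpace ℝ (Fin d)) :
    Continuous fun p : EuclideanSpace ℝ (Fin d) => (inner ℝ u p : ℝ) :=
  continuous_const.inner continuous_id

private theorem dirWidth_nonneg (hA : A.Nonempty) (hc : IsCompact A)
    (u : EuclideanSpace ℝ (Fin d)) : 0 ≤ dirWidth u A := by
  have himg : IsCompact ((fun p => (inner ℝ u p : ℝ)) '' A) := hc.image (inner_cont u)
  have hne : ((fun p => (inner ℝ u p : ℝ)) '' A).Nonempty := hA.image _
  have := Real.sInf_le_sSup _ himg.bddBelow himg.bddAbove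
  simp only [dirWidth]; linarith [this]

private theorem bddBelow_widthSet (hA : A.Nonempty) (hc : IsCompact A) :
    BddBelow {w | ∃ u : EuclideanSpace ℝ (Fin d), ‖u‖ = 1 ∧ w = dirWidth u A} := by
  refine ⟨0, ?_⟩; rintro w ⟨u, hu, rfl⟩; exact dirWidth_nonneg hA hc u

private theorem setWidth_le_dirWidth (hA : A.Nonempty) (hc : IsCompact A)
    {u : EuclideanSpace ℝ (Fin d)} (hu : ‖u‖ = 1) : setWidth A ≤ dirWidth u A :=
  csInf_le (bddBelow_widthSet hA hc) ⟨u, hu, rfl⟩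

private theorem dirWidth_le_of_bound (hA : A.Nonempty) {u : EuclideanSpace ℝ (Fin d)} {c r : ℝ}
    (h : ∀ x ∈ A, |(inner ℝ u x : ℝ) - c| ≤ r) : dirWidth u A ≤ 2 * r := by
  have h1 : sSup ((fun p => (inner ℝ u p : ℝ)) '' A) ≤ c + r := by
    apply csSup_le (hA.image _)
    rintro w ⟨x, hx, rfl⟩; have := abs_le.1 (h x hx); linarith
  have h2 : c - r ≤ sInf ((fun p => (inner ℝ u p : ℝ)) '' A) := by
    apply le_csInf (hA.image _)
    rintro w ⟨x, hx, rfl⟩; have := abs_le.1 (h x hx); linarith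
  simp only [dirWidth]; linarith

private theorem abs_sub_le_dirWidth (hc : IsCompact A) {u a b} (ha : a ∈ A) (hb : b ∈ A) :
    |(inner ℝ u a : ℝ) - (inner ℝ u b : ℝ)| ≤ dirWidth u A := by
  have himg : IsCompact ((fun p => (inner ℝ u p : ℝ)) '' A) := hc.image (inner_cont u)
  have h1 : (inner ℝ u a : ℝ) ≤ sSup _ := le_csSup himg.bddAbove ⟨a, ha, rfl⟩
  have h2 : sInf _ ≤ (inner ℝ u b : ℝ) := csInf_le himg.bddBelow ⟨b, hb, rfl⟩
  have h3 : (inner ℝ u b : ℝ) ≤ sSup _ := le_csSup himg.bddAbove ⟨b, hb, rfl⟩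
  have h4 : sInf _ ≤ (inner ℝ u a : ℝ) := csInf_le himg.bddBelow ⟨a, ha, rfl⟩
  rw [abs_le]; constructor <;> simp only [dirWidth] <;> linarith

private theorem dirWidth_mono (hA : A.Nonempty) (hB : IsCompact B) (hAB : A ⊆ B)
    (u : EuclideanSpace ℝ (Fin d)) : dirWidth u A ≤ dirWidth u B := by
  have himg : IsCompact ((fun p => (inner ℝ u p : ℝ)) '' B) := hB.image (inner_cont u)
  have h1 := csSup_le_csSup himg.bddAbove (hA.image _) (Set.image_mono hAB)
  have h2 := csInf_le_csInf himg.bddBelow (hA.image _) (Set.image_mono hAB)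
  simp only [dirWidth]; linarith

private theorem widthBound (V : Finset (EuclideanSpace ℝ (Fin d)))
    (hV : (V : Set (EuclideanSpace ℝ (Fin d))).Nonempty)
    {u : EuclideanSpace ℝ (Fin d)} {c r : ℝ} (hu : ‖u‖ = 1)
    (h : ∀ w ∈ V, |(inner ℝ u w : ℝ) - c| ≤ r) :
    setWidth (convexHull ℝ (V : Set (EuclideanSpace ℝ (Fin d)))) ≤ 2 * r := by
  have hlin : IsLinearMap ℝ (fun x : EuclideanSpace ℝ (Fin d) => (inner ℝ u x : ℝ)) :=
    ⟨fun x y => inner_add_right u x y, fun t x => real_inner_smul_right u x t⟩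
  have hK : Convex ℝ {x : EuclideanSpace ℝ (Fin d) | |(inner ℝ u x : ℝ) - c| ≤ r} := by
    have : {x : EuclideanSpace ℝ (Fin d) | |(inner ℝ u x : ℝ) - c| ≤ r} =
        {x | (inner ℝ u x : ℝ) ≤ c + r} ∩ {x | c - r ≤ (inner ℝ u x : ℝ)} := by
      ext x; simp only [Set.mem_setOf_eq, Set.mem_inter_iff, abs_le]; constructor <;>
        (intro hx; constructor <;> linarith [hx.1, hx.2])
    rw [this]
    exact (convex_halfSpace_le hlin (c + r)).inter (convex_halfSpace_ge hlin (c - r))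
  have hsub : convexHull ℝ (V : Set (EuclideanSpace ℝ (Fin d))) ⊆
      {x | |(inner ℝ u x : ℝ) - c| ≤ r} := convexHull_min h hK
  have hne : (convexHull ℝ (V : Set (EuclideanSpace ℝ (Fin d)))).Nonempty :=
    hV.mono (subset_convexHull ℝ _)
  refine le_trans (setWidth_le_dirWidth hne (V.finite_toSet.isCompact_convexHull (𝕜 := ℝ)) hu) ?_
  exact dirWidth_le_of_bound hne fun x hx => hsub hx

private theorem exists_unit_orthogonal (W : Submodule ℝ (EuclideanSpace ℝ (Fin d)))
    (hW : Module.finrank ℝ W < d) :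
    ∃ u : EuclideanSpace ℝ (Fin d), ‖u‖ = 1 ∧ u ∈ Wᗮ := by
  have hne : Wᗮ ≠ ⊥ := by
    intro h
    have : W = ⊤ := by rwa [Submodule.orthogonal_eq_bot_iff] at h
    rw [this] at hW
    simp [finrank_euclideanSpace_fin] at hW
  obtain ⟨z, hz, hz0⟩ := Submodule.exists_mem_ne_zero_of_ne_bot hne
  refine ⟨‖z‖⁻¹ • z, ?_, Submodule.smul_mem _ _ hz⟩
  rw [norm_smul, norm_inv, norm_norm, inv_mul_cancel₀ (norm_ne_zero_iff.2 hz0)]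

private theorem exists_onb (hd : 0 < d) (e : Fin d → EuclideanSpace ℝ (Fin d))
    (he : Orthonormal ℝ e) :
    ∃ b : OrthonormalBasis (Fin d) ℝ (EuclideanSpace ℝ (Fin d)), ∀ i, b i = e i := by
  haveI : Nonempty (Fin d) := ⟨⟨0, hd⟩⟩
  have hli := he.linearIndependent
  have hcard : Fintype.card (Fin d) = Module.finrank ℝ (EuclideanSpace ℝ (Fin d)) := by
    simp [finrank_euclideanSpace_fin]
  have hsp : Submodule.span ℝ (Set.range e) = ⊤ := by
    have h := (basisOfLinearIndependentOfCardEqFinrank hli hcard).span_eq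
    rwa [coe_basisOfLinearIndependentOfCardEqFinrank] at h
  exact ⟨OrthonormalBasis.mk he hsp.ge, fun i => by simp [OrthonormalBasis.coe_mk]⟩

private theorem inner_expand (b : OrthonormalBasis (Fin d) ℝ (EuclideanSpace ℝ (Fin d)))
    (u z : EuclideanSpace ℝ (Fin d)) :
    (inner ℝ u z : ℝ) = ∑ i, (inner ℝ (b i) u : ℝ) * (inner ℝ (b i) z : ℝ) := by
  conv_lhs => rw [← b.sum_repr u]
  rw [sum_inner]
  congr 1; ext i
  rw [real_inner_smul_left, b.repr_apply_apply]

private theorem parseval_one (b : OrthonormalBasis (Fin d) ℝ (EuclideanSpace ℝ (Fin d)))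
    {u : EuclideanSpace ℝ (Fin d)} (hu : ‖u‖ = 1) :
    ∑ i, (inner ℝ (b i) u : ℝ) ^ 2 = 1 := by
  have h := inner_expand b u u
  rw [real_inner_self_eq_norm_sq, hu] at h
  simp only [pow_two] at *
  linarith [h]

private theorem sum_Iio_fin (j : Fin d) (f : ℕ → ℝ) :
    ∑ i ∈ Finset.Iio j, f i.val = ∑ n ∈ Finset.range j.val, f n := by
  have hmap := Finset.sum_map (Finset.Iio j) Fin.valEmbedding f
  simp only [Fin.valEmbedding_apply] at hmap
  rw [← hmap]
  congr 1
  ext n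
  simp only [Finset.mem_map, Finset.mem_Iio, Finset.mem_range, Fin.valEmbedding_apply,
    Fin.lt_def]
  constructor
  · rintro ⟨i, hi, rfl⟩; exact hi
  · intro hn; exact ⟨⟨n, lt_trans hn j.isLt⟩, hn, rfl⟩

private theorem geom_sum_bound (m : ℕ) : ∑ n ∈ Finset.range m, (2:ℝ)^n = 2^m - 1 := by
  induction m with
  | zero => simp
  | succ n ih => rw [Finset.sum_range_succ, ih]; ring

private theorem succ_le_castSucc {k j : Fin d} (h : k < j) :
    (k.succ : Fin (d+1)) ≤ j.castSucc := by
  rw [Fin.le_def]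
  rw [Fin.lt_def] at h
  simpa using h

end Helpers

set_option maxHeartbeats 2000000 in
theorem stmt_9 (d : ℕ) :
    ∃ c : ℝ, 0 < c ∧
      ∀ (V : Finset (EuclideanSpace ℝ (Fin d)))
        (v : Fin (d + 1) → EuclideanSpace ℝ (Fin d)),
        (∀ i, v i ∈ V) →
        (∀ i : Fin d, ∀ w ∈ V,
          Metric.infDist w (affineSpan ℝ (v '' {j | j ≤ i.castSucc}) : Set _) ≤
            Metric.infDist (v i.succ) (affineSpan ℝ (v '' {j | j ≤ i.castSucc}) : Set _)) →
        0 < setWidth (convexHull ℝ (V : Set (EuclideanSpace ℝ (Fin d)))) →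
        c * setWidth (convexHull ℝ (V : Set (EuclideanSpace ℝ (Fin d)))) ≤
            setWidth (convexHull ℝ (Set.range v)) ∧
          setWidth (convexHull ℝ (Set.range v)) ≤
            setWidth (convexHull ℝ (V : Set (EuclideanSpace ℝ (Fin d)))) := by
  refine ⟨1 / (2 * (d+1) * 2^d), by positivity, ?_⟩
  intro V v hmem hmax hpos
  by_cases hd0 : d = 0
  · exfalso
    subst hd0
    have hempty : {w | ∃ u : EuclideanSpace ℝ (Fin 0), ‖u‖ = 1 ∧
        w = dirWidth u (convexHull ℝ (V : Set (EuclideanSpace ℝ (Fin 0))))} = ∅ := by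
      ext w
      simp only [Set.mem_setOf_eq, Set.mem_empty_iff_false, iff_false]
      rintro ⟨u, hu, -⟩
      have : u = 0 := Subsingleton.elim u 0
      rw [this] at hu; simp at hu
    rw [setWidth, hempty, Real.sInf_empty] at hpos
    exact lt_irrefl 0 hpos
  have hdpos : 0 < d := Nat.pos_of_ne_zero hd0
  classical
  set S : Fin d → AffineSubspace ℝ (EuclideanSpace ℝ (Fin d)) :=
    fun i => affineSpan ℝ (v '' {j | j ≤ i.castSucc}) with hS
  set h : Fin d → ℝ :=
    fun i => Metric.infDist (v i.succ) (S i : Set (EuclideanSpace ℝ (Fin d))) with hh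
  have hmax' : ∀ (i : Fin d), ∀ w ∈ V,
      Metric.infDist w (S i : Set (EuclideanSpace ℝ (Fin d))) ≤ h i := hmax
  have hvmem : ∀ (i : Fin d) (k : Fin (d+1)), k ≤ i.castSucc → v k ∈ S i :=
    fun i k hk => subset_affineSpan ℝ _ ⟨k, hk, rfl⟩
  have hv0 : ∀ i, v 0 ∈ S i := fun i => hvmem i 0 (by rw [Fin.le_def]; simp)
  have hSmono : ∀ i j : Fin d, i ≤ j → S i ≤ S j := by
    intro i j hij
    apply affineSpan_mono
    apply Set.image_mono
    intro k hk
    simp only [Set.mem_setOf_eq] at hk ⊢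
    refine le_trans hk ?_
    rw [Fin.le_def] at hij ⊢
    simpa using hij
  have hSsub : ∀ i j : Fin d, i ≤ j →
      (S i : Set (EuclideanSpace ℝ (Fin d))) ⊆ (S j : Set (EuclideanSpace ℝ (Fin d))) :=
    fun i j hij => hSmono i j hij
  -- projections
  have key : ∀ i : Fin d, ∃ q : EuclideanSpace ℝ (Fin d), q ∈ S i ∧ h i = ‖v i.succ - q‖ ∧
      (v i.succ - q) ∈ (S i).directionᗮ := by
    intro i
    haveI : Nonempty (S i) := ⟨⟨v 0, hv0 i⟩⟩
    refine ⟨EuclideanGeometry.orthogonalProjection (S i) (v i.succ),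
      EuclideanGeometry.orthogonalProjection_mem _, ?_, ?_⟩
    · have := infDist_eq_dist_orthProj (S i) (v i.succ)
      rw [dist_eq_norm] at this
      exact this
    · have := EuclideanGeometry.vsub_orthogonalProjection_mem_direction_orthogonal (S i) (v i.succ)
      simpa [vsub_eq_sub] using this
  choose q hqmem hqdist hqorth using key
  -- antitone
  have hanti : ∀ i j : Fin d, i ≤ j → h j ≤ h i := by
    intro i j hij
    calc h j ≤ Metric.infDist (v j.succ) (S i : Set (EuclideanSpace ℝ (Fin d))) :=
          Metric.infDist_le_infDist_of_subset (hSsub i j hij) ⟨v 0, hv0 i⟩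
      _ ≤ h i := hmax' i (v j.succ) (hmem _)
  set l : Fin d := ⟨d - 1, by omega⟩ with hl
  have hile : ∀ i : Fin d, i ≤ l := by
    intro i; rw [Fin.le_def]; simp only [hl]; omega
  have hhl : ∀ i : Fin d, h l ≤ h i := fun i => hanti i l (hile i)
  have hVne : (V : Set (EuclideanSpace ℝ (Fin d))).Nonempty := ⟨v 0, hmem 0⟩
  -- positivity of h l
  have hlpos : 0 < h l := by
    rcases lt_or_eq_of_le (Metric.infDist_nonneg : 0 ≤ h l) with hp | hp
    · exact hp
    exfalso
    have hmemS : ∀ w ∈ V, w ∈ S l := by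
      intro w hw
      have h1 : Metric.infDist w (S l : Set (EuclideanSpace ℝ (Fin d))) = 0 :=
        le_antisymm (hp ▸ hmax' l w hw) Metric.infDist_nonneg
      have hcl : IsClosed (S l : Set (EuclideanSpace ℝ (Fin d))) :=
        (S l).closed_of_finiteDimensional
      exact (hcl.mem_iff_infDist_zero ⟨v 0, hv0 l⟩).2 h1
    have hfr : Module.finrank ℝ (S l).direction < d := by
      have hdir : (S l).direction = vectorSpan ℝ (v '' {j | j ≤ l.castSucc}) := by
        rw [hS]; exact direction_affineSpan ℝ _
      have hseteq : v '' {j | j ≤ l.castSucc} =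
          (((Finset.Iic l.castSucc).image v) : Set (EuclideanSpace ℝ (Fin d))) := by
        rw [Finset.coe_image, Finset.coe_Iic]; rfl
      have hcard : (Finset.Iic l.castSucc).card = (d - 1) + 1 := by
        rw [Fin.card_Iic]
        simp only [Fin.coe_castSucc, hl]
      have hb := finrank_vectorSpan_image_finset_le ℝ v (Finset.Iic l.castSucc) hcard
      rw [hdir, hseteq]
      calc Module.finrank ℝ
            (vectorSpan ℝ (((Finset.Iic l.castSucc).image v) : Set (EuclideanSpace ℝ (Fin d))))
          ≤ d - 1 := hb
        _ < d := by omega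
    obtain ⟨u, hu, huo⟩ := exists_unit_orthogonal (S l).direction hfr
    have hbound : ∀ w ∈ V, |(inner ℝ u w : ℝ) - (inner ℝ u (v 0) : ℝ)| ≤ 0 := by
      intro w hw
      have hwmem : w - v 0 ∈ (S l).direction :=
        AffineSubspace.vsub_mem_direction (hmemS w hw) (hv0 l)
      have hz : (inner ℝ u (w - v 0) : ℝ) = 0 := real_inner_comm (w - v 0) u ▸ huo (w - v 0) hwmem
      rw [← inner_sub_right, hz]; simp
    have := widthBound V hVne hu hbound
    linarith
  have hipos : ∀ i : Fin d, 0 < h i := fun i => lt_of_lt_of_le hlpos (hhl i)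
  set e : Fin d → EuclideanSpace ℝ (Fin d) :=
    fun i => (h i)⁻¹ • (v i.succ - q i) with he
  have henorm : ∀ i, ‖e i‖ = 1 := by
    intro i
    rw [he]
    simp only [norm_smul, norm_inv, Real.norm_eq_abs, abs_of_pos (hipos i), ← hqdist i]
    exact inv_mul_cancel₀ (ne_of_gt (hipos i))
  have heorth : ∀ i, e i ∈ (S i).directionᗮ := fun i => Submodule.smul_mem _ _ (hqorth i)
  have hedir : ∀ i j : Fin d, i < j → e i ∈ (S j).direction := by
    intro i j hij
    apply Submodule.smul_mem
    exact AffineSubspace.vsub_mem_direction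
      (hvmem j i.succ (succ_le_castSucc hij)) (hSmono i j (le_of_lt hij) (hqmem i))
  have honb : Orthonormal ℝ e := by
    rw [orthonormal_iff_ite]
    intro i j
    rcases lt_trichotomy i j with hij | hij | hij
    · rw [if_neg (ne_of_lt hij)]
      exact (heorth j) (e i) (hedir i j hij)
    · subst hij
      rw [if_pos rfl, real_inner_self_eq_norm_sq, henorm i, one_pow]
    · rw [if_neg (ne_of_gt hij), real_inner_comm]
      exact (heorth i) (e j) (hedir j i hij)
  -- bound for members of V against e i
  have hebound : ∀ (i : Fin d) (w : EuclideanSpace ℝ (Fin d)),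
      |(inner ℝ (e i) (w - v 0) : ℝ)| ≤ Metric.infDist w (S i : Set (EuclideanSpace ℝ (Fin d))) :=
    fun i w => abs_inner_le_infDist (S i) (henorm i) (heorth i) (hv0 i) w
  -- Step A : width of conv V at most 2 * h l
  have hstepA : setWidth (convexHull ℝ (V : Set (EuclideanSpace ℝ (Fin d)))) ≤ 2 * h l := by
    apply widthBound V hVne (henorm l)
    intro w hw
    have := hebound l w
    rw [inner_sub_right] at this
    calc |(inner ℝ (e l) w : ℝ) - (inner ℝ (e l) (v 0) : ℝ)| ≤
        Metric.infDist w (S l : Set (EuclideanSpace ℝ (Fin d))) := this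
      _ ≤ h l := hmax' l w hw
  -- compactness and nonemptiness facts
  have hPc : IsCompact (convexHull ℝ (V : Set (EuclideanSpace ℝ (Fin d)))) :=
    V.finite_toSet.isCompact_convexHull (𝕜 := ℝ)
  have hDc : IsCompact (convexHull ℝ (Set.range v)) :=
    (Set.finite_range v).isCompact_convexHull (𝕜 := ℝ)
  have hDne : (convexHull ℝ (Set.range v)).Nonempty :=
    ⟨v 0, subset_convexHull ℝ _ ⟨0, rfl⟩⟩
  have hPne : (convexHull ℝ (V : Set (EuclideanSpace ℝ (Fin d)))).Nonempty :=
    hVne.mono (subset_convexHull ℝ _)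
  have hsub : convexHull ℝ (Set.range v) ⊆
      convexHull ℝ (V : Set (EuclideanSpace ℝ (Fin d))) := by
    apply convexHull_mono
    rintro x ⟨i, rfl⟩
    exact hmem i
  set u₀ : EuclideanSpace ℝ (Fin d) := EuclideanSpace.single ⟨0, hdpos⟩ (1:ℝ) with hu₀
  have hu₀n : ‖u₀‖ = 1 := by rw [hu₀]; simp [EuclideanSpace.norm_single]
  -- upper bound conjunct
  have hupper : setWidth (convexHull ℝ (Set.range v)) ≤
      setWidth (convexHull ℝ (V : Set (EuclideanSpace ℝ (Fin d)))) := by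
    rw [setWidth]
    refine le_csInf ⟨dirWidth u₀ (convexHull ℝ (V : Set (EuclideanSpace ℝ (Fin d)))),
      ⟨u₀, hu₀n, rfl⟩⟩ ?_
    rintro w ⟨u, hu, rfl⟩
    exact le_trans (setWidth_le_dirWidth hDne hDc hu) (dirWidth_mono hDne hPc hsub u)
  -- core estimate
  obtain ⟨b, hb⟩ := exists_onb hdpos e honb
  have hdR : (1:ℝ) ≤ (d:ℝ) := by exact_mod_cast hdpos
  have hDpos : 0 < (d:ℝ) * 2^(d-1) := by positivity
  have hK3' : ∀ i j : Fin d, j < i → (inner ℝ (e i) (v j.succ - v 0) : ℝ) = 0 := by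
    intro i j hji
    have hzd : v j.succ - v 0 ∈ (S i).direction :=
      AffineSubspace.vsub_mem_direction (hvmem i j.succ (succ_le_castSucc hji)) (hv0 i)
    exact real_inner_comm (v j.succ - v 0) (e i) ▸ (heorth i) _ hzd
  have hK2 : ∀ j : Fin d, (inner ℝ (e j) (v j.succ - v 0) : ℝ) = h j := by
    intro j
    have hsplit : v j.succ - v 0 = (v j.succ - q j) + (q j - v 0) := by abel
    have h1 : (inner ℝ (e j) (q j - v 0) : ℝ) = 0 := by
      have hm : q j - v 0 ∈ (S j).direction :=
        AffineSubspace.vsub_mem_direction (hqmem j) (hv0 j)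
      exact real_inner_comm (q j - v 0) (e j) ▸ (heorth j) _ hm
    have h2 : (inner ℝ (e j) (v j.succ - q j) : ℝ) = h j := by
      rw [he]
      simp only []
      rw [real_inner_smul_left, real_inner_self_eq_norm_sq, ← hqdist j, pow_two,
        ← mul_assoc, inv_mul_cancel₀ (ne_of_gt (hipos j)), one_mul]
    rw [hsplit, inner_add_right, h1, h2, add_zero]
  have hK3 : ∀ i j : Fin d, i < j → |(inner ℝ (e i) (v j.succ - v 0) : ℝ)| ≤ h i := by
    intro i j hij
    exact le_trans (hebound i (v j.succ)) (hmax' i _ (hmem _))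
  have hkey : ∀ u : EuclideanSpace ℝ (Fin d), ‖u‖ = 1 →
      h l ≤ ((d:ℝ) * 2^(d-1)) * dirWidth u (convexHull ℝ (Set.range v)) := by
    intro u hu
    have hne : (Finset.univ : Finset (Fin (d+1))).Nonempty := Finset.univ_nonempty
    set f : Fin (d+1) → ℝ := fun i => |(inner ℝ u (v i) : ℝ) - (inner ℝ u (v 0) : ℝ)| with hf
    set ε := Finset.univ.sup' hne f with hε
    have hεb : ∀ i, f i ≤ ε := fun i => Finset.le_sup' f (Finset.mem_univ i)
    have hε0 : 0 ≤ ε := le_trans (abs_nonneg _) (hεb 0)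
    have hizb : ∀ j : Fin d, |(inner ℝ u (v j.succ - v 0) : ℝ)| ≤ ε := by
      intro j
      rw [inner_sub_right]
      exact hεb j.succ
    have hK1 : ∀ j : Fin d, (inner ℝ u (v j.succ - v 0) : ℝ) =
        ∑ i ∈ Finset.Iic j, (inner ℝ (e i) u : ℝ) * (inner ℝ (e i) (v j.succ - v 0) : ℝ) := by
      intro j
      rw [inner_expand b u (v j.succ - v 0)]
      simp only [hb]
      symm
      apply Finset.sum_subset (Finset.subset_univ _)
      intro i _ hi
      have hji : j < i := by
        rcases lt_or_ge j i with hc | hc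
        · exact hc
        · exact absurd (Finset.mem_Iic.2 hc) hi
      rw [hK3' i j hji, mul_zero]
    have hrec : ∀ n : ℕ, ∀ j : Fin d, (j : ℕ) = n →
        |(inner ℝ (e j) u : ℝ)| * h j ≤ 2^(j:ℕ) * ε := by
      intro n
      induction n using Nat.strong_induction_on with
      | _ n ih =>
        intro j hj
        have hIic : Finset.Iic j = insert j (Finset.Iio j) := (Finset.Iio_insert j).symm
        have hsum := hK1 j
        rw [hIic, Finset.sum_insert (by simp)] at hsum
        rw [hK2 j] at hsum
        have heq : (inner ℝ (e j) u : ℝ) * h j = (inner ℝ u (v j.succ - v 0) : ℝ) -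
            ∑ i ∈ Finset.Iio j, (inner ℝ (e i) u : ℝ) * (inner ℝ (e i) (v j.succ - v 0) : ℝ) := by
          linarith
        have habs : |(inner ℝ (e j) u : ℝ)| * h j ≤
            ε + ∑ i ∈ Finset.Iio j, |(inner ℝ (e i) u : ℝ)| * h i := by
          have e1 : |(inner ℝ (e j) u : ℝ)| * h j = |(inner ℝ (e j) u : ℝ) * h j| := by
            rw [abs_mul, abs_of_pos (hipos j)]
          rw [e1, heq]
          have e2 : ∀ a b : ℝ, |a - b| ≤ |a| + |b| := by
            intro a b
            calc |a - b| = |a + (-b)| := by rw [sub_eq_add_neg]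
              _ ≤ |a| + |(-b)| := abs_add_le a (-b)
              _ = |a| + |b| := by rw [abs_neg]
          refine le_trans (e2 _ _) ?_
          have e3 : |∑ i ∈ Finset.Iio j,
              (inner ℝ (e i) u : ℝ) * (inner ℝ (e i) (v j.succ - v 0) : ℝ)| ≤
              ∑ i ∈ Finset.Iio j, |(inner ℝ (e i) u : ℝ)| * h i := by
            refine le_trans (Finset.abs_sum_le_sum_abs _ _) ?_
            apply Finset.sum_le_sum
            intro i hi
            rw [abs_mul]
            exact mul_le_mul_of_nonneg_left (hK3 i j (Finset.mem_Iio.1 hi)) (abs_nonneg _)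
          exact add_le_add (hizb j) e3
        have hterm : ∀ i ∈ Finset.Iio j, |(inner ℝ (e i) u : ℝ)| * h i ≤ 2^(i:ℕ) * ε := by
          intro i hi
          have hij : i < j := Finset.mem_Iio.1 hi
          refine ih i.val ?_ i rfl
          rw [← hj]
          exact hij
        have hsumb : ∑ i ∈ Finset.Iio j, |(inner ℝ (e i) u : ℝ)| * h i ≤ 2^(j:ℕ) * ε - ε := by
          calc ∑ i ∈ Finset.Iio j, |(inner ℝ (e i) u : ℝ)| * h i
              ≤ ∑ i ∈ Finset.Iio j, 2^(i:ℕ) * ε := Finset.sum_le_sum hterm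
            _ = ∑ n ∈ Finset.range j.val, 2^n * ε := sum_Iio_fin j (fun n => 2^n * ε)
            _ = (∑ n ∈ Finset.range j.val, (2:ℝ)^n) * ε := by rw [Finset.sum_mul]
            _ = (2^(j:ℕ) - 1) * ε := by rw [geom_sum_bound]
            _ = 2^(j:ℕ) * ε - ε := by ring
        linarith
    have hco_b : ∀ j : Fin d, |(inner ℝ (e j) u : ℝ)| * h l ≤ 2^(d-1) * ε := by
      intro j
      calc |(inner ℝ (e j) u : ℝ)| * h l ≤ |(inner ℝ (e j) u : ℝ)| * h j :=
            mul_le_mul_of_nonneg_left (hhl j) (abs_nonneg _)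
        _ ≤ 2^(j:ℕ) * ε := hrec j.val j rfl
        _ ≤ 2^(d-1) * ε := by
            refine mul_le_mul_of_nonneg_right ?_ hε0
            refine pow_le_pow_right₀ (by norm_num) ?_
            have := j.isLt; omega
    have hpars : ∑ i, (inner ℝ (e i) u : ℝ) ^ 2 = 1 := by
      have hp := parseval_one b hu
      simp only [hb] at hp
      exact hp
    have hfinal : h l ≤ (d:ℝ) * 2^(d-1) * ε := by
      have h1 : (h l)^2 = ∑ i, (|(inner ℝ (e i) u : ℝ)| * h l)^2 := by
        calc (h l)^2 = (∑ i, (inner ℝ (e i) u : ℝ)^2) * (h l)^2 := by rw [hpars, one_mul]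
          _ = ∑ i, (|(inner ℝ (e i) u : ℝ)| * h l)^2 := by
              rw [Finset.sum_mul]
              apply Finset.sum_congr rfl
              intro i _
              rw [mul_pow, sq_abs]
      have h2 : ∑ i, (|(inner ℝ (e i) u : ℝ)| * h l)^2 ≤
          ∑ _i : Fin d, ((2:ℝ)^(d-1) * ε)^2 := by
        apply Finset.sum_le_sum
        intro i _
        exact pow_le_pow_left₀ (by positivity) (hco_b i) 2
      have h3 : ∑ _i : Fin d, ((2:ℝ)^(d-1) * ε)^2 = (d:ℝ) * (2^(d-1)*ε)^2 := by
        rw [Finset.sum_const, Finset.card_univ, Fintype.card_fin, nsmul_eq_mul]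
      have h4 : (h l)^2 ≤ ((d:ℝ) * 2^(d-1) * ε)^2 := by
        have e5 : (d:ℝ) * (2^(d-1)*ε)^2 ≤ ((d:ℝ) * 2^(d-1) * ε)^2 := by nlinarith [sq_nonneg ((2:ℝ)^(d-1)*ε)]
        calc (h l)^2 = ∑ i, (|(inner ℝ (e i) u : ℝ)| * h l)^2 := h1
          _ ≤ (d:ℝ) * (2^(d-1)*ε)^2 := by rw [← h3]; exact h2
          _ ≤ ((d:ℝ) * 2^(d-1) * ε)^2 := e5
      have hX0 : 0 ≤ (d:ℝ) * 2^(d-1) * ε := mul_nonneg (le_of_lt hDpos) hε0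
      exact (pow_le_pow_iff_left₀ (le_of_lt hlpos) hX0 (by norm_num)).1 h4
    obtain ⟨i₀, -, hi₀⟩ := Finset.exists_mem_eq_sup' hne f
    have hεle : ε ≤ dirWidth u (convexHull ℝ (Set.range v)) := by
      rw [hε, hi₀]
      exact abs_sub_le_dirWidth hDc (subset_convexHull ℝ _ ⟨i₀, rfl⟩)
        (subset_convexHull ℝ _ ⟨0, rfl⟩)
    calc h l ≤ (d:ℝ) * 2^(d-1) * ε := hfinal
      _ ≤ ((d:ℝ) * 2^(d-1)) * dirWidth u (convexHull ℝ (Set.range v)) :=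
          mul_le_mul_of_nonneg_left hεle (le_of_lt hDpos)
  -- lower bound on setWidth of the simplex
  have hlow : h l / ((d:ℝ) * 2^(d-1)) ≤ setWidth (convexHull ℝ (Set.range v)) := by
    rw [setWidth]
    refine le_csInf ⟨dirWidth u₀ (convexHull ℝ (Set.range v)), ⟨u₀, hu₀n, rfl⟩⟩ ?_
    rintro w ⟨u, hu, rfl⟩
    rw [div_le_iff₀ hDpos]
    calc h l ≤ ((d:ℝ) * 2^(d-1)) * dirWidth u (convexHull ℝ (Set.range v)) := hkey u hu
      _ = dirWidth u (convexHull ℝ (Set.range v)) * ((d:ℝ) * 2^(d-1)) := by ring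
  refine ⟨?_, hupper⟩
  have hc2 : (1:ℝ) / (2 * (d+1) * 2^d) * (2 * h l) ≤ h l / ((d:ℝ) * 2^(d-1)) := by
    rw [div_mul_eq_mul_div, one_mul, div_le_div_iff₀ (by positivity) hDpos]
    have hp1 : (2:ℝ)^(d-1) ≤ 2^d := pow_le_pow_right₀ (by norm_num) (by omega)
    have hl0 : 0 ≤ h l := le_of_lt hlpos
    have k1 : 0 ≤ h l * ((d:ℝ) * (2^d - 2^(d-1))) :=
      mul_nonneg hl0 (mul_nonneg (by linarith) (by linarith))
    have k2 : 0 ≤ h l * (2:ℝ)^d :=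
      mul_nonneg hl0 (le_of_lt (pow_pos (by norm_num) d))
    nlinarith [k1, k2]
  calc (1:ℝ) / (2 * (d+1) * 2^d) * setWidth (convexHull ℝ (V : Set (EuclideanSpace ℝ (Fin d))))
      ≤ (1:ℝ) / (2 * (d+1) * 2^d) * (2 * h l) :=
        mul_le_mul_of_nonneg_left hstepA (by positivity)
    _ ≤ h l / ((d:ℝ) * 2^(d-1)) := hc2
    _ ≤ setWidth (convexHull ℝ (Set.range v)) := hlow
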